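/- Let 1 < p ≤ 2, M > 0, and let χ: ℝ⁺ → ℝ be a function for which there exist constants 0 < C₁ ≤ C₂ such that C₁/|log u|^p ≤ χ(u) ≤ C₂/|log u|^p for all u ∈ ℝ⁺ with |log u| > M, and such that M₀(χ) < +∞. Then M_ν(χ) = +∞ for every ν with p − 1 ≤ ν ≤ 1, and M_ν(χ) < +∞ for every ν with 0 ≤ ν < p − 1. -/
import Mathlib


open Real MeasureTheory Filter Set

/-- The Kantorovich exponential sampling series
`(I_w^χ f)(x) = ∑_{k∈ℤ} χ(e^{−k} x^w) · w ∫_{k/w}^{(k+1)/w} f(e^u) du`. -/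
noncomputable def kanto (χ f : ℝ → ℝ) (w x : ℝ) : ℝ :=
  ∑' k : ℤ, χ (Real.exp (-(k : ℝ)) * x ^ w) *
    (w * ∫ u in ((k : ℝ) / w)..(((k : ℝ) + 1) / w), f (Real.exp u))

/-- The absolute moment of order ν:
`M_ν(χ) = sup_{u∈ℝ⁺} ∑_{k∈ℤ} |χ(e^{−k}u)|·|k − log u|^ν`, valued in `[0,∞]`. -/
noncomputable def absMoment (χ : ℝ → ℝ) (ν : ℝ) : ENNReal :=
  ⨆ u : {x : ℝ // 0 < x}, ∑' k : ℤ,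
    ENNReal.ofReal (|χ (Real.exp (-(k : ℝ)) * u.1)| * |(k : ℝ) - Real.log u.1| ^ ν)

/-- χ : ℝ⁺ → ℝ is a kernel: (i) integrable on ℝ⁺ and bounded on [1/e, e];
(ii) ∑_{k∈ℤ} χ(e^{−k}u) = 1 for all u > 0; (iii) M_ν(χ) < ∞ for some ν > 0. -/
structure IsKernel (χ : ℝ → ℝ) : Prop where
  integrable : IntegrableOn χ (Ioi 0)
  bounded : ∃ C, ∀ u ∈ Icc (Real.exp (-1)) (Real.exp 1), |χ u| ≤ C
  partition : ∀ u : ℝ, 0 < u → HasSum (fun k : ℤ => χ (Real.exp (-(k : ℝ)) * u)) 1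
  moment : ∃ ν > 0, absMoment χ ν < ⊤

/-- `ψ_χ⁻(u) = ∑_{k > log u} χ(u e^{−k})`. -/
noncomputable def psiMinus (χ : ℝ → ℝ) (u : ℝ) : ℝ :=
  ∑' k : {k : ℤ // Real.log u < (k : ℝ)}, χ (u * Real.exp (-(k.1 : ℝ)))

/-- `ψ_χ⁺(u) = ∑_{k < log u} χ(u e^{−k})`. -/
noncomputable def psiPlus (χ : ℝ → ℝ) (u : ℝ) : ℝ :=
  ∑' k : {k : ℤ // (k : ℝ) < Real.log u}, χ (u * Real.exp (-(k.1 : ℝ)))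

private lemma aux_not_summable {q : ℝ} (hq : -1 ≤ q) (m : ℕ) :
    ¬ Summable (fun n : ℕ => ((n : ℝ) + (m : ℝ)) ^ q) := by
  intro h
  have h2 : Summable (fun n : ℕ => ((n : ℝ)) ^ q) := by
    rw [← summable_nat_add_iff m]
    exact h.congr (fun n => by push_cast; ring_nf)
  rw [Real.summable_nat_rpow] at h2
  linarith

private lemma aux_summable_nat {q : ℝ} (hq : q < -1) :
    Summable (fun n : ℕ => (max 1 ((n : ℝ) - 1)) ^ q) := by
  rw [← summable_nat_add_iff 2]
  have h1 : Summable (fun n : ℕ => ((n : ℝ) + 1) ^ q) := by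
    have h0 : Summable (fun n : ℕ => ((n : ℝ)) ^ q) := Real.summable_nat_rpow.mpr hq
    exact ((summable_nat_add_iff 1).mpr h0).congr (fun n => by push_cast; ring_nf)
  refine h1.congr (fun n => ?_)
  have hb : ((n + 2 : ℕ) : ℝ) - 1 = (n : ℝ) + 1 := by push_cast; ring
  rw [hb, max_eq_right (le_add_of_nonneg_left (n.cast_nonneg))]

private lemma aux_summable_int {q : ℝ} (hq : q < -1) :
    Summable (fun n : ℤ => (max 1 (|(n : ℝ)| - 1)) ^ q) := by
  apply Summable.of_nat_of_neg
  · exact (aux_summable_nat hq).congr (fun n => by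
      rw [abs_of_nonneg (by positivity : (0:ℝ) ≤ ((n : ℤ) : ℝ))]; norm_cast)
  · exact (aux_summable_nat hq).congr (fun n => by
      push_cast
      rw [abs_neg, abs_of_nonneg (by positivity : (0:ℝ) ≤ (n : ℝ))])

/-- If `C₁/|log u|^p ≤ χ(u) ≤ C₂/|log u|^p` for `|log u| > M` with `1 < p ≤ 2`, and
`M₀(χ) < ∞`, then `M_ν(χ) = ∞` for `p − 1 ≤ ν ≤ 1` and `M_ν(χ) < ∞` for `0 ≤ ν < p − 1`. -/
theorem absMoment_finiteness_dichotomy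
    (p M : ℝ) (hp1 : 1 < p) (hp2 : p ≤ 2) (hM : 0 < M)
    (χ : ℝ → ℝ) (C₁ C₂ : ℝ) (hC₁ : 0 < C₁) (hC₁₂ : C₁ ≤ C₂)
    (hbound : ∀ u : ℝ, 0 < u → M < |Real.log u| →
      C₁ / |Real.log u| ^ p ≤ χ u ∧ χ u ≤ C₂ / |Real.log u| ^ p)
    (hM0 : absMoment χ 0 < ⊤) :
    (∀ ν : ℝ, p - 1 ≤ ν → ν ≤ 1 → absMoment χ ν = ⊤) ∧
    (∀ ν : ℝ, 0 ≤ ν → ν < p - 1 → absMoment χ ν < ⊤) := by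
  have hC₂ : 0 < C₂ := lt_of_lt_of_le hC₁ hC₁₂
  constructor
  · -- divergence part
    intro ν hν1 hν2
    have hq1 : -1 ≤ ν - p := by linarith
    rw [absMoment, ← top_le_iff]
    refine le_trans ?_ (le_iSup _ ⟨1, one_pos⟩)
    show (⊤ : ENNReal) ≤ ∑' k : ℤ,
      ENNReal.ofReal (|χ (Real.exp (-(k : ℝ)) * 1)| * |(k : ℝ) - Real.log 1| ^ ν)
    set m₀ : ℕ := ⌈M⌉₊ + 1 with hm₀
    have hinj : Function.Injective (fun n : ℕ => (n : ℤ) + (m₀ : ℤ)) := by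
      intro a b hab
      simpa using hab
    refine le_trans ?_ (ENNReal.tsum_comp_le_tsum_of_injective hinj _)
    have hterm : ∀ n : ℕ, ENNReal.ofReal (C₁ * ((n : ℝ) + (m₀ : ℝ)) ^ (ν - p)) ≤
        ENNReal.ofReal (|χ (Real.exp (-(((n : ℤ) + (m₀ : ℤ) : ℤ) : ℝ)) * 1)| *
          |(((n : ℤ) + (m₀ : ℤ) : ℤ) : ℝ) - Real.log 1| ^ ν) := by
      intro n
      set r : ℝ := (n : ℝ) + (m₀ : ℝ) with hr
      have hrcast : (((n : ℤ) + (m₀ : ℤ) : ℤ) : ℝ) = r := by rw [hr, hm₀]; push_cast; ring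
      have hrM : M < r := by
        have h1 : M ≤ (⌈M⌉₊ : ℝ) := Nat.le_ceil M
        have h2 : ((m₀ : ℕ) : ℝ) = (⌈M⌉₊ : ℝ) + 1 := by rw [hm₀]; push_cast; ring
        have h3 : (0:ℝ) ≤ (n : ℝ) := n.cast_nonneg
        rw [hr]
        linarith
      have hr0 : 0 < r := lt_trans hM hrM
      have hlog : Real.log (Real.exp (-r) * 1) = -r := by
        rw [mul_one, Real.log_exp]
      have hMd : M < |Real.log (Real.exp (-r) * 1)| := by
        rw [hlog, abs_neg, abs_of_pos hr0]; exact hrM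
      obtain ⟨h1, _⟩ := hbound _ (by positivity) hMd
      rw [hlog, abs_neg, abs_of_pos hr0] at h1
      apply ENNReal.ofReal_le_ofReal
      rw [hrcast, Real.log_one, sub_zero, abs_of_pos hr0]
      calc C₁ * r ^ (ν - p) = (C₁ / r ^ p) * r ^ ν := by
            rw [Real.rpow_sub hr0]; ring
        _ ≤ χ (Real.exp (-r) * 1) * r ^ ν :=
            mul_le_mul_of_nonneg_right h1 (Real.rpow_nonneg hr0.le ν)
        _ ≤ |χ (Real.exp (-r) * 1)| * r ^ ν :=
            mul_le_mul_of_nonneg_right (le_abs_self _) (Real.rpow_nonneg hr0.le ν)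
    refine le_trans ?_ (ENNReal.tsum_le_tsum (fun n => by
      simpa using hterm n))
    rw [top_le_iff]
    by_contra h
    have hsum := ENNReal.summable_toReal h
    have hsum2 : Summable (fun n : ℕ => C₁ * ((n : ℝ) + (m₀ : ℝ)) ^ (ν - p)) := by
      refine hsum.congr (fun n => ?_)
      rw [ENNReal.toReal_ofReal (by positivity)]
    have := (summable_mul_left_iff (ne_of_gt hC₁)).mp hsum2
    exact aux_not_summable hq1 m₀ this
  · -- finiteness part
    intro ν hν0 hν1
    have hq : ν - p < -1 := by linarith
    have hSsum := aux_summable_int hq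
    set S : ENNReal := ∑' n : ℤ, ENNReal.ofReal ((max 1 (|(n : ℝ)| - 1)) ^ (ν - p)) with hSdef
    have hSfin : S < ⊤ := by
      rw [hSdef, ← ENNReal.ofReal_tsum_of_nonneg
        (fun n => Real.rpow_nonneg (le_trans zero_le_one (le_max_left _ _)) _) hSsum]
      exact ENNReal.ofReal_lt_top
    have hfin : ENNReal.ofReal ((M + 1) ^ ν) * absMoment χ 0 + ENNReal.ofReal C₂ * S < ⊤ :=
      ENNReal.add_lt_top.mpr ⟨ENNReal.mul_lt_top ENNReal.ofReal_lt_top hM0,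
        ENNReal.mul_lt_top ENNReal.ofReal_lt_top hSfin⟩
    rw [absMoment]
    refine lt_of_le_of_lt (iSup_le fun uu => ?_) hfin
    obtain ⟨u, hu⟩ := uu
    show ∑' k : ℤ, ENNReal.ofReal (|χ (Real.exp (-(k : ℝ)) * u)| * |(k : ℝ) - Real.log u| ^ ν) ≤ _
    set t := Real.log u with ht
    calc ∑' k : ℤ, ENNReal.ofReal (|χ (Real.exp (-(k : ℝ)) * u)| * |(k : ℝ) - t| ^ ν)
        ≤ ∑' k : ℤ, (ENNReal.ofReal ((M + 1) ^ ν) * ENNReal.ofReal (|χ (Real.exp (-(k : ℝ)) * u)|)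
            + ENNReal.ofReal C₂ *
              ENNReal.ofReal ((max 1 (|((k - ⌊t⌋ : ℤ) : ℝ)| - 1)) ^ (ν - p))) := by
          refine ENNReal.tsum_le_tsum (fun k => ?_)
          by_cases hcase : |(k : ℝ) - t| ≤ M + 1
          · refine le_trans ?_ le_self_add
            rw [← ENNReal.ofReal_mul (Real.rpow_nonneg (by linarith) ν)]
            apply ENNReal.ofReal_le_ofReal
            calc |χ (Real.exp (-(k : ℝ)) * u)| * |(k : ℝ) - t| ^ ν
                ≤ |χ (Real.exp (-(k : ℝ)) * u)| * (M + 1) ^ ν :=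
                  mul_le_mul_of_nonneg_left
                    (Real.rpow_le_rpow (abs_nonneg _) hcase hν0) (abs_nonneg _)
              _ = (M + 1) ^ ν * |χ (Real.exp (-(k : ℝ)) * u)| := mul_comm _ _
          · push_neg at hcase
            refine le_trans ?_ le_add_self
            rw [← ENNReal.ofReal_mul hC₂.le]
            apply ENNReal.ofReal_le_ofReal
            have hd0 : (0:ℝ) < |(k : ℝ) - t| := by linarith
            have hlog : Real.log (Real.exp (-(k : ℝ)) * u) = t - k := by
              rw [Real.log_mul (Real.exp_ne_zero _) (ne_of_gt hu), Real.log_exp, ht]; ring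
            have habs : |Real.log (Real.exp (-(k : ℝ)) * u)| = |(k : ℝ) - t| := by
              rw [hlog, abs_sub_comm]
            have hMd : M < |Real.log (Real.exp (-(k : ℝ)) * u)| := by
              rw [habs]; linarith
            obtain ⟨h1, h2⟩ := hbound _ (mul_pos (Real.exp_pos _) hu) hMd
            rw [habs] at h1 h2
            have hχnn : 0 ≤ χ (Real.exp (-(k : ℝ)) * u) :=
              le_trans (by positivity) h1
            have hnb : max 1 (|((k - ⌊t⌋ : ℤ) : ℝ)| - 1) ≤ |(k : ℝ) - t| := by
              have hf1 : (⌊t⌋ : ℝ) ≤ t := Int.floor_le t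
              have hf2 : t < (⌊t⌋ : ℝ) + 1 := Int.lt_floor_add_one t
              have hb : |((k - ⌊t⌋ : ℤ) : ℝ)| ≤ |(k : ℝ) - t| + 1 := by
                push_cast
                calc |(k : ℝ) - (⌊t⌋ : ℝ)| = |((k : ℝ) - t) + (t - (⌊t⌋ : ℝ))| := by ring_nf
                  _ ≤ |(k : ℝ) - t| + |t - (⌊t⌋ : ℝ)| := abs_add_le _ _
                  _ ≤ |(k : ℝ) - t| + 1 := by
                      have habs2 : |t - (⌊t⌋ : ℝ)| ≤ 1 := by
                        rw [abs_of_nonneg (by linarith : (0:ℝ) ≤ t - (⌊t⌋ : ℝ))]; linarith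
                      linarith
              exact max_le (by linarith) (by linarith)
            calc |χ (Real.exp (-(k : ℝ)) * u)| * |(k : ℝ) - t| ^ ν
                ≤ (C₂ / |(k : ℝ) - t| ^ p) * |(k : ℝ) - t| ^ ν := by
                  apply mul_le_mul_of_nonneg_right _ (Real.rpow_nonneg hd0.le ν)
                  rw [abs_of_nonneg hχnn]; exact h2
              _ = C₂ * |(k : ℝ) - t| ^ (ν - p) := by
                  rw [Real.rpow_sub hd0]; ring
              _ ≤ C₂ * (max 1 (|((k - ⌊t⌋ : ℤ) : ℝ)| - 1)) ^ (ν - p) := by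
                  refine mul_le_mul_of_nonneg_left ?_ hC₂.le
                  exact Real.rpow_le_rpow_of_nonpos
                    (lt_of_lt_of_le zero_lt_one (le_max_left _ _)) hnb (by linarith)
      _ = ENNReal.ofReal ((M + 1) ^ ν) *
            (∑' k : ℤ, ENNReal.ofReal (|χ (Real.exp (-(k : ℝ)) * u)|))
          + ENNReal.ofReal C₂ *
            (∑' k : ℤ, ENNReal.ofReal ((max 1 (|((k - ⌊t⌋ : ℤ) : ℝ)| - 1)) ^ (ν - p))) := by
          rw [ENNReal.tsum_add, ENNReal.tsum_mul_left, ENNReal.tsum_mul_left]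
      _ ≤ ENNReal.ofReal ((M + 1) ^ ν) * absMoment χ 0 + ENNReal.ofReal C₂ * S := by
          refine add_le_add (mul_le_mul_right ?_ _) (le_of_eq ?_)
          · rw [absMoment]
            refine le_trans (le_of_eq (tsum_congr fun k => ?_))
              (le_iSup (fun v : {x : ℝ // 0 < x} => ∑' k : ℤ,
                ENNReal.ofReal (|χ (Real.exp (-(k : ℝ)) * v.1)| *
                  |(k : ℝ) - Real.log v.1| ^ (0:ℝ))) (⟨u, hu⟩ : {x : ℝ // 0 < x}))
            rw [Real.rpow_zero, mul_one]
          · congr 1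
            exact ((Equiv.subRight (⌊t⌋ : ℤ)).tsum_eq
              (fun n : ℤ => ENNReal.ofReal ((max 1 (|(n : ℝ)| - 1)) ^ (ν - p))))
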